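/- Let A be an n×n matrix over a field with all off-diagonal entries nonzero, and let S be a cut of A. For any T ⊆ [n] such that neither T nor its complement is contained in S or in the complement of S, T is a cut of A if and only if the symmetric difference T Δ S is a cut of tw(A,S). -/

import Mathlib

open Matrix

/-- `X` is a cut of `A`. -/
def IsCut {F : Type*} [Field F] {m : Type*} [Fintype m] [DecidableEq m]
    (A : Matrix m m F) (X : Finset m) : Prop :=
  2 ≤ X.card ∧ X.card + 2 ≤ Fintype.card m ∧
  (A.submatrix (fun i : X => (i : m)) (fun j : (Xᶜ : Finset m) => (j : m))).rank ≤ 1 ∧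
  (A.submatrix (fun i : (Xᶜ : Finset m) => (i : m)) (fun j : X => (j : m))).rank ≤ 1

/-- The cut-transpose of `A` with respect to the cut `X`, given rank-one
factorizations `A[X,X̄] = p·qᵀ` and `A[X̄,X] = u·vᵀ`. -/
def cutTranspose {F : Type*} [Field F] {n : ℕ} (A : Matrix (Fin n) (Fin n) F)
    (X : Finset (Fin n)) (p v q u : Fin n → F) : Matrix (Fin n) (Fin n) F :=
  fun i j =>
    if i ∈ X then (if j ∈ X then A i j else p i * u j)
    else (if j ∈ X then q i * v j else A j i)

section Helpers

variable {F : Type*} [Field F]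

lemma rank_le_one_of_factor {α β : Type*} [Fintype α] [Fintype β]
    (M : Matrix α β F) (f : α → F) (g : β → F)
    (h : ∀ i j, M i j = f i * g j) : M.rank ≤ 1 := by
  classical
  have hr : LinearMap.range M.mulVecLin ≤ Submodule.span F {f} := by
    rintro x ⟨y, rfl⟩
    refine Submodule.mem_span_singleton.2 ⟨∑ j, g j * y j, ?_⟩
    ext i
    simp only [Matrix.mulVecLin_apply, Matrix.mulVec, dotProduct, Pi.smul_apply,
      smul_eq_mul]
    rw [Finset.sum_mul]
    refine Finset.sum_congr rfl fun j _ => ?_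
    rw [h i j]; ring
  have h1 : Module.finrank F (Submodule.span F ({f} : Set (α → F))) ≤ 1 := by
    by_cases hf : f = 0
    · rw [hf, Submodule.span_zero_singleton]
      simp
    · exact le_of_eq (finrank_span_singleton hf)
  exact le_trans (Submodule.finrank_mono hr) h1

lemma minor_eq_of_rank_le_one {α β : Type*} [Fintype α] [Fintype β] [DecidableEq β]
    (M : Matrix α β F) (hM : M.rank ≤ 1) (i i' : α) (j j' : β) :
    M i j * M i' j' = M i j' * M i' j := by
  classical
  have hx : (fun k => M k j) ∈ LinearMap.range M.mulVecLin :=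
    ⟨Pi.single j 1, by ext k; simp⟩
  have hy : (fun k => M k j') ∈ LinearMap.range M.mulVecLin :=
    ⟨Pi.single j' 1, by ext k; simp⟩
  by_cases h0 : (fun k => M k j) = (0 : α → F)
  · have h0i : ∀ k, M k j = 0 := fun k => congrFun h0 k
    rw [h0i i, h0i i']; ring
  · have hspan : Submodule.span F {(fun k => M k j)} = LinearMap.range M.mulVecLin := by
      apply Submodule.eq_of_le_of_finrank_le
      · rw [Submodule.span_le, Set.singleton_subset_iff]; exact hx
      · rw [finrank_span_singleton h0]; exact hM
    obtain ⟨c, hc⟩ := Submodule.mem_span_singleton.1 (hspan ▸ hy)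
    have hci : ∀ k, M k j' = c * M k j := fun k => (congrFun hc k).symm
    rw [hci i, hci i']; ring

lemma rank_block_le_one {n : ℕ} (A : Matrix (Fin n) (Fin n) F) (X Y : Finset (Fin n))
    (f g : Fin n → F) (h : ∀ i ∈ X, ∀ j ∈ Y, A i j = f i * g j) :
    (A.submatrix (fun i : X => (i : Fin n)) (fun j : Y => (j : Fin n))).rank ≤ 1 :=
  rank_le_one_of_factor _ (fun i => f i) (fun j => g j) fun i j => h i i.2 j j.2

lemma exists_factor {n : ℕ} (A : Matrix (Fin n) (Fin n) F) (X Y : Finset (Fin n))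
    (hr : (A.submatrix (fun i : X => (i : Fin n)) (fun j : Y => (j : Fin n))).rank ≤ 1)
    {i0 j0 : Fin n} (hi0 : i0 ∈ X) (hj0 : j0 ∈ Y) (h0 : A i0 j0 ≠ 0) :
    ∃ f g : Fin n → F, ∀ i ∈ X, ∀ j ∈ Y, A i j = f i * g j := by
  refine ⟨fun i => A i j0 / A i0 j0, fun j => A i0 j, fun i hi j hj => ?_⟩
  have h := minor_eq_of_rank_le_one _ hr ⟨i, hi⟩ ⟨i0, hi0⟩ ⟨j, hj⟩ ⟨j0, hj0⟩
  simp only [Matrix.submatrix_apply] at h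
  field_simp
  linear_combination h

end Helpers

lemma fwd_cut {n : ℕ} {F : Type*} [Field F] (A : Matrix (Fin n) (Fin n) F)
    (hoff : ∀ i j : Fin n, i ≠ j → A i j ≠ 0)
    (S : Finset (Fin n)) (p v q u : Fin n → F)
    (hpq : ∀ i ∈ S, ∀ j ∉ S, A i j = p i * q j)
    (huv : ∀ i ∉ S, ∀ j ∈ S, A i j = u i * v j)
    (T : Finset (Fin n))
    (h1 : ¬ T ⊆ S) (h2 : ¬ T ⊆ Sᶜ) (h3 : ¬ Tᶜ ⊆ S) (h4 : ¬ Tᶜ ⊆ Sᶜ)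
    (hT : IsCut A T) : IsCut (cutTranspose A S p v q u) (symmDiff T S) := by
  classical
  obtain ⟨ib, hibT, hibS⟩ := Finset.not_subset.1 h1
  obtain ⟨ia, hiaT, hia'⟩ := Finset.not_subset.1 h2
  have hiaS : ia ∈ S := by simpa using hia'
  obtain ⟨id', hid1, hidS⟩ := Finset.not_subset.1 h3
  have hidT : id' ∉ T := Finset.mem_compl.1 hid1
  obtain ⟨ic, hic1, hic'⟩ := Finset.not_subset.1 h4
  have hicT : ic ∉ T := Finset.mem_compl.1 hic1
  have hicS : ic ∈ S := by simpa using hic'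
  -- nonvanishing of p, q, u, v
  have hp : ∀ i ∈ S, p i ≠ 0 := by
    intro i hi hpi
    have hne : i ≠ ib := fun h => hibS (h ▸ hi)
    exact hoff i ib hne (by rw [hpq i hi ib hibS, hpi, zero_mul])
  have hq : ∀ j ∉ S, q j ≠ 0 := by
    intro j hj hqj
    have hne : ia ≠ j := fun h => hj (h ▸ hiaS)
    exact hoff ia j hne (by rw [hpq ia hiaS j hj, hqj, mul_zero])
  have hu : ∀ i ∉ S, u i ≠ 0 := by
    intro i hi hui
    have hne : i ≠ ia := fun h => hi (h ▸ hiaS)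
    exact hoff i ia hne (by rw [huv i hi ia hiaS, hui, zero_mul])
  have hv : ∀ j ∈ S, v j ≠ 0 := by
    intro j hj hvj
    have hne : ib ≠ j := fun h => hibS (h ▸ hj)
    exact hoff ib j hne (by rw [huv ib hibS j hj, hvj, mul_zero])
  obtain ⟨-, -, r1, r2⟩ := hT
  have hac : ia ≠ ic := fun h => hicT (h ▸ hiaT)
  have hca : ic ≠ ia := fun h => hicT (h.symm ▸ hiaT)
  obtain ⟨P, Q, hPQ'⟩ := exists_factor A T Tᶜ r1 hiaT (Finset.mem_compl.2 hicT) (hoff _ _ hac)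
  obtain ⟨U, V, hUV'⟩ := exists_factor A Tᶜ T r2 (Finset.mem_compl.2 hicT) hiaT (hoff _ _ hca)
  have hPQ : ∀ i ∈ T, ∀ j ∉ T, A i j = P i * Q j :=
    fun i hi j hj => hPQ' i hi j (Finset.mem_compl.2 hj)
  have hUV : ∀ i ∉ T, ∀ j ∈ T, A i j = U i * V j :=
    fun i hi j hj => hUV' i (Finset.mem_compl.2 hi) j hj
  -- nonvanishing of P, Q, U, V
  have hP : ∀ i ∈ T, P i ≠ 0 := by
    intro i hi h0
    have hne : i ≠ ic := fun h => hicT (h ▸ hi)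
    exact hoff i ic hne (by rw [hPQ i hi ic hicT, h0, zero_mul])
  have hQ : ∀ j ∉ T, Q j ≠ 0 := by
    intro j hj h0
    have hne : ia ≠ j := fun h => hj (h ▸ hiaT)
    exact hoff ia j hne (by rw [hPQ ia hiaT j hj, h0, mul_zero])
  have hU : ∀ i ∉ T, U i ≠ 0 := by
    intro i hi h0
    have hne : i ≠ ia := fun h => hi (h ▸ hiaT)
    exact hoff i ia hne (by rw [hUV i hi ia hiaT, h0, zero_mul])
  have hV : ∀ j ∈ T, V j ≠ 0 := by
    intro j hj h0
    have hne : ic ≠ j := fun h => hicT (h ▸ hj)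
    exact hoff ic j hne (by rw [hUV ic hicT j hj, h0, mul_zero])
  -- the four transfer constants
  set e1 : F := p ia / P ia with he1
  set e2 : F := u ib / P ib with he2
  set e3 : F := p ic / U ic with he3
  set e4 : F := u id' / U id' with he4
  have he1ne : e1 ≠ 0 := div_ne_zero (hp ia hiaS) (hP ia hiaT)
  have he2ne : e2 ≠ 0 := div_ne_zero (hu ib hibS) (hP ib hibT)
  have he3ne : e3 ≠ 0 := div_ne_zero (hp ic hicS) (hU ic hicT)
  have he4ne : e4 ≠ 0 := div_ne_zero (hu id' hidS) (hU id' hidT)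
  -- transfer lemmas
  have ha2 : ∀ j, j ∉ T → j ∉ S → Q j = e1 * q j := by
    intro j hjT hjS
    have h := (hPQ ia hiaT j hjT).symm.trans (hpq ia hiaS j hjS)
    rw [he1]
    field_simp [hP ia hiaT]
    linear_combination h
  have ha1 : ∀ i, i ∈ T → i ∈ S → p i = e1 * P i := by
    intro i hiT hiS
    have h : p i * q id' = (e1 * P i) * q id' := by
      rw [← hpq i hiS id' hidS, hPQ i hiT id' hidT, ha2 id' hidT hidS]; ring
    exact mul_right_cancel₀ (hq id' hidS) h
  have hb2 : ∀ j, j ∉ T → j ∈ S → Q j = e2 * v j := by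
    intro j hjT hjS
    have h := (hPQ ib hibT j hjT).symm.trans (huv ib hibS j hjS)
    rw [he2]
    field_simp [hP ib hibT]
    linear_combination h
  have hb1 : ∀ i, i ∈ T → i ∉ S → u i = e2 * P i := by
    intro i hiT hiS
    have h : u i * v ic = (e2 * P i) * v ic := by
      rw [← huv i hiS ic hicS, hPQ i hiT ic hicT, hb2 ic hicT hicS]; ring
    exact mul_right_cancel₀ (hv ic hicS) h
  have hg2 : ∀ j, j ∈ T → j ∉ S → V j = e3 * q j := by
    intro j hjT hjS
    have h := (hUV ic hicT j hjT).symm.trans (hpq ic hicS j hjS)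
    rw [he3]
    field_simp [hU ic hicT]
    linear_combination h
  have hg1 : ∀ i, i ∉ T → i ∈ S → p i = e3 * U i := by
    intro i hiT hiS
    have h : p i * q ib = (e3 * U i) * q ib := by
      rw [← hpq i hiS ib hibS, hUV i hiT ib hibT, hg2 ib hibT hibS]; ring
    exact mul_right_cancel₀ (hq ib hibS) h
  have hd2 : ∀ j, j ∈ T → j ∈ S → V j = e4 * v j := by
    intro j hjT hjS
    have h := (hUV id' hidT j hjT).symm.trans (huv id' hidS j hjS)
    rw [he4]
    field_simp [hU id' hidT]
    linear_combination h
  have hd1 : ∀ i, i ∉ T → i ∉ S → u i = e4 * U i := by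
    intro i hiT hiS
    have h : u i * v ia = (e4 * U i) * v ia := by
      rw [← huv i hiS ia hiaS, hUV i hiT ia hiaT, hd2 ia hiaT hiaS]; ring
    exact mul_right_cancel₀ (hv ia hiaS) h
  -- the two rank-one factorizations of the cut-transpose blocks
  have key1 : ∀ i ∈ symmDiff T S, ∀ j ∈ (symmDiff T S)ᶜ,
      cutTranspose A S p v q u i j =
        (if i ∈ S then U i else V i / (e3 * e4)) *
        (if j ∈ S then e4 * v j else e3 * e4 * U j) := by
    intro i hi j hj
    rw [Finset.mem_symmDiff] at hi
    rw [Finset.mem_compl, Finset.mem_symmDiff] at hj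
    push_neg at hj
    by_cases hiS : i ∈ S
    · have hiT : i ∉ T := by
        rcases hi with h | h
        · exact absurd hiS h.2
        · exact h.2
      by_cases hjS : j ∈ S
      · have hjT : j ∈ T := hj.2 hjS
        simp only [cutTranspose, if_pos hiS, if_pos hjS]
        rw [hUV i hiT j hjT, hd2 j hjT hjS]
      · have hjT : j ∉ T := fun h => hjS (hj.1 h)
        simp only [cutTranspose, if_pos hiS, if_neg hjS]
        rw [hg1 i hiT hiS, hd1 j hjT hjS]; ring
    · have hiT : i ∈ T := by
        rcases hi with h | h
        · exact h.1
        · exact absurd h.1 hiS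
      by_cases hjS : j ∈ S
      · have hjT : j ∈ T := hj.2 hjS
        simp only [cutTranspose, if_neg hiS, if_pos hjS]
        rw [hg2 i hiT hiS]
        field_simp
      · have hjT : j ∉ T := fun h => hjS (hj.1 h)
        simp only [cutTranspose, if_neg hiS, if_neg hjS]
        rw [hUV j hjT i hiT]
        field_simp
  have key2 : ∀ i ∈ (symmDiff T S)ᶜ, ∀ j ∈ symmDiff T S,
      cutTranspose A S p v q u i j =
        (if i ∈ S then P i else Q i / (e1 * e2)) *
        (if j ∈ S then e2 * v j else e1 * e2 * P j) := by
    intro i hi j hj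
    rw [Finset.mem_compl, Finset.mem_symmDiff] at hi
    push_neg at hi
    rw [Finset.mem_symmDiff] at hj
    by_cases hiS : i ∈ S
    · have hiT : i ∈ T := hi.2 hiS
      by_cases hjS : j ∈ S
      · have hjT : j ∉ T := by
          rcases hj with h | h
          · exact absurd hjS h.2
          · exact h.2
        simp only [cutTranspose, if_pos hiS, if_pos hjS]
        rw [hPQ i hiT j hjT, hb2 j hjT hjS]
      · have hjT : j ∈ T := by
          rcases hj with h | h
          · exact h.1
          · exact absurd h.1 hjS
        simp only [cutTranspose, if_pos hiS, if_neg hjS]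
        rw [ha1 i hiT hiS, hb1 j hjT hjS]; ring
    · have hiT : i ∉ T := fun h => hiS (hi.1 h)
      by_cases hjS : j ∈ S
      · have hjT : j ∉ T := by
          rcases hj with h | h
          · exact absurd hjS h.2
          · exact h.2
        simp only [cutTranspose, if_neg hiS, if_pos hjS]
        rw [ha2 i hiT hiS]
        field_simp
      · have hjT : j ∈ T := by
          rcases hj with h | h
          · exact h.1
          · exact absurd h.1 hjS
        simp only [cutTranspose, if_neg hiS, if_neg hjS]
        rw [hPQ j hjT i hiT, ha2 i hiT hiS]
        field_simp
  -- membership facts for the cardinality bounds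
  have hbm : ib ∈ symmDiff T S := Finset.mem_symmDiff.2 (Or.inl ⟨hibT, hibS⟩)
  have hcm : ic ∈ symmDiff T S := Finset.mem_symmDiff.2 (Or.inr ⟨hicS, hicT⟩)
  have ham : ia ∈ (symmDiff T S)ᶜ := by
    rw [Finset.mem_compl, Finset.mem_symmDiff]
    push_neg
    exact ⟨fun _ => hiaS, fun _ => hiaT⟩
  have hdm : id' ∈ (symmDiff T S)ᶜ := by
    rw [Finset.mem_compl, Finset.mem_symmDiff]
    push_neg
    exact ⟨fun h => absurd h hidT, fun h => absurd h hidS⟩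
  have hbc : ib ≠ ic := fun h => hicT (h ▸ hibT)
  have had : ia ≠ id' := fun h => hidT (h ▸ hiaT)
  have card1 : 2 ≤ (symmDiff T S).card :=
    Finset.one_lt_card.2 ⟨ib, hbm, ic, hcm, hbc⟩
  have card2 : (symmDiff T S).card + 2 ≤ Fintype.card (Fin n) := by
    have h2 : 2 ≤ ((symmDiff T S)ᶜ).card := Finset.one_lt_card.2 ⟨ia, ham, id', hdm, had⟩
    have h3 : ((symmDiff T S)ᶜ).card = Fintype.card (Fin n) - (symmDiff T S).card :=
      Finset.card_compl _
    have h4 : (symmDiff T S).card ≤ Fintype.card (Fin n) := Finset.card_le_univ _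
    omega
  exact ⟨card1, card2,
    rank_block_le_one _ _ _ _ _ key1,
    rank_block_le_one _ _ _ _ _ key2⟩

theorem cut_symmDiff_iff_cut_of_cutTranspose {n : ℕ} {F : Type*} [Field F]
    (A : Matrix (Fin n) (Fin n) F)
    (hoff : ∀ i j : Fin n, i ≠ j → A i j ≠ 0)
    (S : Finset (Fin n)) (hS : IsCut A S) (p v q u : Fin n → F)
    (hpq : ∀ i ∈ S, ∀ j ∉ S, A i j = p i * q j)
    (huv : ∀ i ∉ S, ∀ j ∈ S, A i j = u i * v j)
    (T : Finset (Fin n))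
    (h1 : ¬ T ⊆ S) (h2 : ¬ T ⊆ Sᶜ) (h3 : ¬ Tᶜ ⊆ S) (h4 : ¬ Tᶜ ⊆ Sᶜ) :
    IsCut A T ↔ IsCut (cutTranspose A S p v q u) (symmDiff T S) := by
  classical
  constructor
  · exact fwd_cut A hoff S p v q u hpq huv T h1 h2 h3 h4
  · intro hcut'
    set B := cutTranspose A S p v q u with hB
    obtain ⟨ib, hibT, hibS⟩ := Finset.not_subset.1 h1
    obtain ⟨ia, hiaT, hia'⟩ := Finset.not_subset.1 h2
    have hiaS : ia ∈ S := by simpa using hia'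
    obtain ⟨id', hid1, hidS⟩ := Finset.not_subset.1 h3
    have hidT : id' ∉ T := Finset.mem_compl.1 hid1
    obtain ⟨ic, hic1, hic'⟩ := Finset.not_subset.1 h4
    have hicT : ic ∉ T := Finset.mem_compl.1 hic1
    have hicS : ic ∈ S := by simpa using hic'
    have hp : ∀ i ∈ S, p i ≠ 0 := by
      intro i hi hpi
      have hne : i ≠ ib := fun h => hibS (h ▸ hi)
      exact hoff i ib hne (by rw [hpq i hi ib hibS, hpi, zero_mul])
    have hq : ∀ j ∉ S, q j ≠ 0 := by
      intro j hj hqj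
      have hne : ia ≠ j := fun h => hj (h ▸ hiaS)
      exact hoff ia j hne (by rw [hpq ia hiaS j hj, hqj, mul_zero])
    have hu : ∀ i ∉ S, u i ≠ 0 := by
      intro i hi hui
      have hne : i ≠ ia := fun h => hi (h ▸ hiaS)
      exact hoff i ia hne (by rw [huv i hi ia hiaS, hui, zero_mul])
    have hv : ∀ j ∈ S, v j ≠ 0 := by
      intro j hj hvj
      have hne : ib ≠ j := fun h => hibS (h ▸ hj)
      exact hoff ib j hne (by rw [huv ib hibS j hj, hvj, mul_zero])
    have hoffB : ∀ i j : Fin n, i ≠ j → B i j ≠ 0 := by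
      intro i j hij
      by_cases hi : i ∈ S <;> by_cases hj : j ∈ S <;>
        simp only [hB, cutTranspose, if_pos, if_neg, hi, hj, if_true, if_false]
      · exact hoff i j hij
      · exact mul_ne_zero (hp i hi) (hu j hj)
      · exact mul_ne_zero (hq i hi) (hv j hj)
      · exact hoff j i (Ne.symm hij)
    have hpqB : ∀ i ∈ S, ∀ j ∉ S, B i j = p i * u j := by
      intro i hi j hj
      simp only [hB, cutTranspose, if_pos hi, if_neg hj]
    have huvB : ∀ i ∉ S, ∀ j ∈ S, B i j = q i * v j := by
      intro i hi j hj
      simp only [hB, cutTranspose, if_neg hi, if_pos hj]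
    have hbm : ib ∈ symmDiff T S := Finset.mem_symmDiff.2 (Or.inl ⟨hibT, hibS⟩)
    have hcm : ic ∈ symmDiff T S := Finset.mem_symmDiff.2 (Or.inr ⟨hicS, hicT⟩)
    have ham : ia ∈ (symmDiff T S)ᶜ := by
      rw [Finset.mem_compl, Finset.mem_symmDiff]
      push_neg
      exact ⟨fun _ => hiaS, fun _ => hiaT⟩
    have hdm : id' ∈ (symmDiff T S)ᶜ := by
      rw [Finset.mem_compl, Finset.mem_symmDiff]
      push_neg
      exact ⟨fun h => absurd h hidT, fun h => absurd h hidS⟩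
    have h1' : ¬ symmDiff T S ⊆ S := fun hsub => hibS (hsub hbm)
    have h2' : ¬ symmDiff T S ⊆ Sᶜ := fun hsub => Finset.mem_compl.1 (hsub hcm) hicS
    have h3' : ¬ (symmDiff T S)ᶜ ⊆ S := fun hsub => hidS (hsub hdm)
    have h4' : ¬ (symmDiff T S)ᶜ ⊆ Sᶜ := fun hsub => Finset.mem_compl.1 (hsub ham) hiaS
    have hmain := fwd_cut B hoffB S p v u q hpqB huvB (symmDiff T S) h1' h2' h3' h4' hcut'
    have hBA : cutTranspose B S p v u q = A := by
      ext i j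
      by_cases hi : i ∈ S <;> by_cases hj : j ∈ S <;>
        simp only [hB, cutTranspose, hi, hj, if_true, if_false]
      · exact (hpq i hi j hj).symm
      · exact (huv i hi j hj).symm
    have hTT : symmDiff (symmDiff T S) S = T := symmDiff_symmDiff_cancel_right S T
    rwa [hBA, hTT] at hmain
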